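/- arXiv:2007.15912 — 5 statements merged into one kernel-verified Lean document; each statement's English description precedes it below -/
import Mathlib

section
/- Let G = (G_1,…,G_r) : ℝ^N → ℝ^r be continuously differentiable such that at every point x with G(x) = 0 the total derivative DG_x : ℝ^N → ℝ^r is surjective. If μ = (μ^1,…,μ^r) : ℝ^N → ℝ^r is differentiable and Σ_{a=1}^r μ^a(x) G_a(x) = 0 for all x ∈ ℝ^N, then μ(x) = 0 at every point x with G(x) = 0 (the coefficients of a combination of regular irreducible constraints that vanishes identically must themselves vanish on the constraint surface). -/
open scoped BigOperators

/-- If `G : ℝ^N → ℝ^r` is C¹ with surjective differential at every point of its zero set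
(regular, irreducible constraints), and `μ : ℝ^N → ℝ^r` is differentiable with
`Σ_a μ^a G_a = 0` identically, then `μ` vanishes on the constraint surface `{G = 0}`. -/
theorem coefficients_vanish_on_constraint_surface {N r : ℕ} (hN : 1 ≤ N) (hr : 1 ≤ r)
    (G : (Fin N → ℝ) → (Fin r → ℝ)) (hG : ContDiff ℝ 1 G)
    (hreg : ∀ x, G x = 0 → Function.Surjective (fderiv ℝ G x))
    (μ : (Fin N → ℝ) → (Fin r → ℝ)) (hμ : Differentiable ℝ μ)
    (h : ∀ x, ∑ a, μ x a * G x a = 0) :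
    ∀ x, G x = 0 → μ x = 0 := by
  intro x hx
  have hGdiff : Differentiable ℝ G := hG.differentiable one_ne_zero
  have hGd : HasFDerivAt G (fderiv ℝ G x) x := (hGdiff x).hasFDerivAt
  have hμd : HasFDerivAt μ (fderiv ℝ μ x) x := (hμ x).hasFDerivAt
  -- componentwise derivatives
  have hGa : ∀ a : Fin r, HasFDerivAt (fun y => G y a)
      ((ContinuousLinearMap.proj a).comp (fderiv ℝ G x)) x := fun a =>
    ((ContinuousLinearMap.proj a : (Fin r → ℝ) →L[ℝ] ℝ).hasFDerivAt).comp x hGd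
  have hμa : ∀ a : Fin r, HasFDerivAt (fun y => μ y a)
      ((ContinuousLinearMap.proj a).comp (fderiv ℝ μ x)) x := fun a =>
    ((ContinuousLinearMap.proj a : (Fin r → ℝ) →L[ℝ] ℝ).hasFDerivAt).comp x hμd
  have hsum : HasFDerivAt (fun y => ∑ a, μ y a * G y a)
      (∑ a, (μ x a • ((ContinuousLinearMap.proj a).comp (fderiv ℝ G x))
        + G x a • ((ContinuousLinearMap.proj a).comp (fderiv ℝ μ x)))) x := by
    exact HasFDerivAt.fun_sum (fun a _ => (hμa a).mul (hGa a))
  have hzero : HasFDerivAt (fun y => ∑ a, μ y a * G y a)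
      (0 : (Fin N → ℝ) →L[ℝ] ℝ) x := by
    have : (fun y => ∑ a, μ y a * G y a) = fun _ => (0 : ℝ) := funext h
    rw [this]
    exact hasFDerivAt_const 0 x
  have hD : (∑ a, (μ x a • ((ContinuousLinearMap.proj a).comp (fderiv ℝ G x))
        + G x a • ((ContinuousLinearMap.proj a).comp (fderiv ℝ μ x))))
      = (0 : (Fin N → ℝ) →L[ℝ] ℝ) := hsum.unique hzero
  obtain ⟨v, hv⟩ := hreg x hx (μ x)
  have hval : (∑ a, (μ x a • ((ContinuousLinearMap.proj a).comp (fderiv ℝ G x))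
        + G x a • ((ContinuousLinearMap.proj a).comp (fderiv ℝ μ x)))) v = 0 := by
    rw [hD]; rfl
  have hsq : ∑ a, μ x a * μ x a = 0 := by
    have hGx : ∀ a, G x a = 0 := fun a => congrFun hx a
    simp only [ContinuousLinearMap.sum_apply, ContinuousLinearMap.add_apply,
      ContinuousLinearMap.smul_apply, ContinuousLinearMap.comp_apply,
      ContinuousLinearMap.proj_apply, hGx, zero_smul, add_zero, smul_eq_mul] at hval
    calc ∑ a, μ x a * μ x a = ∑ a, μ x a * (fderiv ℝ G x v a) := by
          rw [hv]
      _ = 0 := hval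
  funext a
  have := (Finset.sum_eq_zero_iff_of_nonneg
    (fun a _ => mul_self_nonneg (μ x a))).mp hsq a (Finset.mem_univ a)
  have := mul_self_eq_zero.mp this
  simpa using this
end

section
/- Suppose G_1,…,G_r are first class with structure functions C^c_{ab} for the canonical Poisson bracket on ℝ^n × ℝ^n, and suppose that at every point z of the constraint surface {z : G_a(z) = 0 for all a} the total derivative of G = (G_1,…,G_r) is surjective onto ℝ^r. Then for every d ∈ {1,…,r} and all a,b,c, the function given by the sum over the three cyclic permutations of (a,b,c) of [ Σ_{e=1}^r C^e_{ab} C^d_{ec} − {G_c, C^d_{ab}} ] vanishes at every point of the constraint surface. (On-shell Jacobi identity for the induced Lie algebroid structure on the constraint surface.) -/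
open scoped BigOperators

/-- `∂f/∂x^i` on phase space `ℝ^n × ℝ^n`. -/
noncomputable def pdx {n : ℕ} (f : (Fin n → ℝ) × (Fin n → ℝ) → ℝ) (i : Fin n)
    (z : (Fin n → ℝ) × (Fin n → ℝ)) : ℝ :=
  fderiv ℝ f z (Pi.single i 1, 0)

/-- `∂f/∂p_i` on phase space `ℝ^n × ℝ^n`. -/
noncomputable def pdp {n : ℕ} (f : (Fin n → ℝ) × (Fin n → ℝ) → ℝ) (i : Fin n)
    (z : (Fin n → ℝ) × (Fin n → ℝ)) : ℝ :=
  fderiv ℝ f z (0, Pi.single i 1)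

/-- The canonical Poisson bracket on `ℝ^n × ℝ^n`. -/
noncomputable def pbr {n : ℕ} (f g : (Fin n → ℝ) × (Fin n → ℝ) → ℝ)
    (z : (Fin n → ℝ) × (Fin n → ℝ)) : ℝ :=
  ∑ i, (pdx f i z * pdp g i z - pdp f i z * pdx g i z)

namespace OSJ

variable {n : ℕ}

local notation "E" => (Fin n → ℝ) × (Fin n → ℝ)

def ex (i : Fin n) : (Fin n → ℝ) × (Fin n → ℝ) := (Pi.single i 1, 0)
def ep (i : Fin n) : (Fin n → ℝ) × (Fin n → ℝ) := (0, Pi.single i 1)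

noncomputable def D2 (f : (Fin n → ℝ) × (Fin n → ℝ) → ℝ)
    (z v w : (Fin n → ℝ) × (Fin n → ℝ)) : ℝ :=
  fderiv ℝ (fun y => fderiv ℝ f y v) z w

lemma leT : ((⊤:ℕ∞) : WithTop ℕ∞) + 1 ≤ ((⊤:ℕ∞) : WithTop ℕ∞) := by simp

lemma le1 : ((⊤:ℕ∞) : WithTop ℕ∞) ≠ 0 := by
  have h : (1 : WithTop ℕ∞) = ((1:ℕ∞) : WithTop ℕ∞) := rfl
  have h1 : (1 : WithTop ℕ∞) ≤ ((⊤:ℕ∞) : WithTop ℕ∞) := by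
    rw [h]; exact WithTop.coe_le_coe.mpr le_top
  exact ne_of_gt (lt_of_lt_of_le zero_lt_one h1)

lemma smooth_pd {f : E → ℝ} (hf : ContDiff ℝ (⊤:ℕ∞) f) (v : E) :
    ContDiff ℝ (⊤:ℕ∞) (fun z => fderiv ℝ f z v) :=
  (ContinuousLinearMap.apply ℝ ℝ v).contDiff.comp (hf.fderiv_right leT)

lemma D2sym {f : E → ℝ} (hf : ContDiff ℝ (⊤:ℕ∞) f) (z v w : E) :
    D2 f z v w = D2 f z w v := by
  have hd1 : Differentiable ℝ (fderiv ℝ f) := (hf.fderiv_right leT).differentiable le1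
  have key := second_derivative_symmetric (f := f) (f' := fderiv ℝ f)
    (fun y => ((hf.differentiable le1) y).hasFDerivAt) ((hd1 z).hasFDerivAt) w v
  unfold D2
  rw [fderiv_clm_apply (hd1 z) (differentiableAt_const v),
    fderiv_clm_apply (hd1 z) (differentiableAt_const w)]
  simp [key]

lemma pbr_smooth {f g : E → ℝ} (hf : ContDiff ℝ (⊤:ℕ∞) f) (hg : ContDiff ℝ (⊤:ℕ∞) g) :
    ContDiff ℝ (⊤:ℕ∞) (pbr f g) := by
  unfold pbr pdx pdp
  exact ContDiff.sum fun i _ =>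
    ((smooth_pd hf _).mul (smooth_pd hg _)).sub ((smooth_pd hf _).mul (smooth_pd hg _))

lemma fderiv_pbr {f g : E → ℝ} (hf : ContDiff ℝ (⊤:ℕ∞) f) (hg : ContDiff ℝ (⊤:ℕ∞) g)
    (z v : E) :
    fderiv ℝ (pbr f g) z v
      = ∑ i, (pdx f i z * D2 g z (ep i) v + pdp g i z * D2 f z (ex i) v
        - (pdp f i z * D2 g z (ex i) v + pdx g i z * D2 f z (ep i) v)) := by
  have hdiff : ∀ (F : E → ℝ), ContDiff ℝ (⊤:ℕ∞) F → ∀ (u : E),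
      HasFDerivAt (fun y => fderiv ℝ F y u) (fderiv ℝ (fun y => fderiv ℝ F y u) z) z :=
    fun F hF u => (((smooth_pd hF u).differentiable le1) z).hasFDerivAt
  have H : HasFDerivAt (pbr f g)
      (∑ i, ((pdx f i z • fderiv ℝ (fun y => fderiv ℝ g y (ep i)) z
          + pdp g i z • fderiv ℝ (fun y => fderiv ℝ f y (ex i)) z)
        - (pdp f i z • fderiv ℝ (fun y => fderiv ℝ g y (ex i)) z
          + pdx g i z • fderiv ℝ (fun y => fderiv ℝ f y (ep i)) z))) z := by
    show HasFDerivAt (fun y => ∑ i : Fin n,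
      (fderiv ℝ f y (ex i) * fderiv ℝ g y (ep i) - fderiv ℝ f y (ep i) * fderiv ℝ g y (ex i))) _ z
    exact HasFDerivAt.fun_sum fun i _ =>
      ((hdiff f hf (ex i)).mul (hdiff g hg (ep i))).sub
        ((hdiff f hf (ep i)).mul (hdiff g hg (ex i)))
  rw [H.fderiv]
  simp only [ContinuousLinearMap.sum_apply, ContinuousLinearMap.add_apply,
    ContinuousLinearMap.sub_apply, ContinuousLinearMap.smul_apply, smul_eq_mul]
  rfl


lemma sum_antisym {S : Fin n → Fin n → ℝ} (h : ∀ i j, S i j + S j i = 0) :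
    (∑ j, ∑ i, S i j) = 0 := by
  have hc : (∑ j, ∑ i, S i j) = ∑ j, ∑ i, S j i := Finset.sum_comm
  have h2 : (∑ j, ∑ i, S i j) + (∑ j, ∑ i, S i j) = 0 := by
    nth_rewrite 2 [hc]
    rw [← Finset.sum_add_distrib]
    refine Finset.sum_eq_zero fun j _ => ?_
    rw [← Finset.sum_add_distrib]
    exact Finset.sum_eq_zero fun i _ => h i j
  linarith

lemma expand {f g h : E → ℝ} (hg : ContDiff ℝ (⊤:ℕ∞) g) (hh : ContDiff ℝ (⊤:ℕ∞) h) (z : E) :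
    pbr f (pbr g h) z
      = ∑ j, ∑ i,
        (pdx f j z * (pdx g i z * D2 h z (ep i) (ep j) + pdp h i z * D2 g z (ex i) (ep j)
            - (pdp g i z * D2 h z (ex i) (ep j) + pdx h i z * D2 g z (ep i) (ep j)))
          - pdp f j z * (pdx g i z * D2 h z (ep i) (ex j) + pdp h i z * D2 g z (ex i) (ex j)
            - (pdp g i z * D2 h z (ex i) (ex j) + pdx h i z * D2 g z (ep i) (ex j)))) := by
  have h0 : pbr f (pbr g h) z
      = ∑ j, (pdx f j z * fderiv ℝ (pbr g h) z (ep j)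
        - pdp f j z * fderiv ℝ (pbr g h) z (ex j)) := rfl
  rw [h0]
  refine Finset.sum_congr rfl fun j _ => ?_
  rw [fderiv_pbr hg hh, fderiv_pbr hg hh, Finset.mul_sum, Finset.mul_sum,
    ← Finset.sum_sub_distrib]

lemma jacobi {f g h : E → ℝ} (hf : ContDiff ℝ (⊤:ℕ∞) f) (hg : ContDiff ℝ (⊤:ℕ∞) g)
    (hh : ContDiff ℝ (⊤:ℕ∞) h) (z : E) :
    pbr f (pbr g h) z + pbr g (pbr h f) z + pbr h (pbr f g) z = 0 := by
  rw [expand hg hh z, expand hh hf z, expand hf hg z]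
  simp only [← Finset.sum_add_distrib]
  refine sum_antisym fun i j => ?_
  rw [D2sym hf z (ex j) (ex i), D2sym hf z (ep j) (ep i), D2sym hf z (ex j) (ep i),
    D2sym hf z (ep j) (ex i), D2sym hg z (ex j) (ex i), D2sym hg z (ep j) (ep i),
    D2sym hg z (ex j) (ep i), D2sym hg z (ep j) (ex i), D2sym hh z (ex j) (ex i),
    D2sym hh z (ep j) (ep i), D2sym hh z (ex j) (ep i), D2sym hh z (ep j) (ex i)]
  ring

lemma pbr_sum {r : ℕ} {f : E → ℝ} {u : Fin r → E → ℝ} {z : E}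
    (hu : ∀ e, DifferentiableAt ℝ (u e) z) :
    pbr f (fun w => ∑ e, u e w) z = ∑ e, pbr f (u e) z := by
  have hx : ∀ v : E, fderiv ℝ (fun w => ∑ e, u e w) z v = ∑ e, fderiv ℝ (u e) z v := by
    intro v
    rw [fderiv_fun_sum fun e _ => hu e]
    simp [ContinuousLinearMap.sum_apply]
  unfold pbr pdx pdp
  simp only [hx]
  simp only [Finset.mul_sum, ← Finset.sum_sub_distrib]
  exact Finset.sum_comm

lemma pbr_mul {f u v : E → ℝ} {z : E}
    (hu : DifferentiableAt ℝ u z) (hv : DifferentiableAt ℝ v z) :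
    pbr f (fun w => u w * v w) z = pbr f u z * v z + u z * pbr f v z := by
  have hx : ∀ w' : E, fderiv ℝ (fun w => u w * v w) z w'
      = u z * fderiv ℝ v z w' + v z * fderiv ℝ u z w' := by
    intro w'
    rw [fderiv_fun_mul hu hv]
    simp
  unfold pbr pdx pdp
  simp only [hx]
  rw [show (∑ i : Fin n, (fderiv ℝ f z (Pi.single i 1, 0)
        * (u z * fderiv ℝ v z (0, Pi.single i 1) + v z * fderiv ℝ u z (0, Pi.single i 1))
      - fderiv ℝ f z (0, Pi.single i 1)
        * (u z * fderiv ℝ v z (Pi.single i 1, 0) + v z * fderiv ℝ u z (Pi.single i 1, 0))))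
    = ∑ i : Fin n, ((fderiv ℝ f z (Pi.single i 1, 0) * fderiv ℝ u z (0, Pi.single i 1)
        - fderiv ℝ f z (0, Pi.single i 1) * fderiv ℝ u z (Pi.single i 1, 0)) * v z
      + u z * (fderiv ℝ f z (Pi.single i 1, 0) * fderiv ℝ v z (0, Pi.single i 1)
        - fderiv ℝ f z (0, Pi.single i 1) * fderiv ℝ v z (Pi.single i 1, 0)))
    from Finset.sum_congr rfl fun i _ => by ring]
  rw [Finset.sum_add_distrib, ← Finset.sum_mul, ← Finset.mul_sum]

end OSJ

/-- For regular irreducible first-class constraints `G_a` with structure functions `C^c_{ab}`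
(written `C a b c`), the on-shell Jacobi identity holds: for each `d`, the cyclic sum over
`(a,b,c)` of `Σ_e C^e_{ab} C^d_{ec} − {G_c, C^d_{ab}}` vanishes at every point of the
constraint surface. -/
theorem first_class_onshell_jacobi {n r : ℕ}
    (G : Fin r → (Fin n → ℝ) × (Fin n → ℝ) → ℝ)
    (hG : ∀ a, ContDiff ℝ (⊤ : ℕ∞) (G a))
    (C : Fin r → Fin r → Fin r → (Fin n → ℝ) × (Fin n → ℝ) → ℝ)
    (hC : ∀ a b c, ContDiff ℝ (⊤ : ℕ∞) (C a b c))
    (hCanti : ∀ a b c z, C a b c z = - C b a c z)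
    (hfc : ∀ a b z, pbr (G a) (G b) z = ∑ c, C a b c z * G c z)
    (hreg : ∀ z, (∀ a, G a z = 0) →
      Function.Surjective (fderiv ℝ (fun w => (fun a => G a w : Fin r → ℝ)) z)) :
    ∀ (d a b c : Fin r) (z : (Fin n → ℝ) × (Fin n → ℝ)), (∀ e, G e z = 0) →
      ((∑ e, C a b e z * C e c d z) - pbr (G c) (C a b d) z)
        + ((∑ e, C b c e z * C e a d z) - pbr (G a) (C b c d) z)
        + ((∑ e, C c a e z * C e b d z) - pbr (G b) (C c a d) z)
      = 0 := by
  intro d a b c z hz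
  open OSJ in
  -- the expansion of a double bracket using first-class property
  have hexp : ∀ (x y u : Fin r) (w : (Fin n → ℝ) × (Fin n → ℝ)),
      pbr (G x) (pbr (G y) (G u)) w
        = ∑ e, pbr (G x) (C y u e) w * G e w
          + ∑ e, (∑ e', C y u e' w * C x e' e w) * G e w := by
    intro x y u w
    have hfn : pbr (G y) (G u) = fun w' => ∑ e, C y u e w' * G e w' := funext (hfc y u)
    rw [hfn]
    rw [OSJ.pbr_sum (f := G x) (u := fun e w' => C y u e w' * G e w') (z := w)
      (fun e => (((hC y u e).mul (hG e)).differentiable OSJ.le1 w))]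
    rw [show (∑ e, pbr (G x) (fun w' => C y u e w' * G e w') w)
        = ∑ e, (pbr (G x) (C y u e) w * G e w + C y u e w * ∑ e', C x e e' w * G e' w) from
      Finset.sum_congr rfl fun e _ => by
        rw [OSJ.pbr_mul ((hC y u e).differentiable OSJ.le1 w) ((hG e).differentiable OSJ.le1 w),
          hfc x e w]]
    rw [Finset.sum_add_distrib]
    congr 1
    simp_rw [Finset.mul_sum]
    rw [Finset.sum_comm]
    refine Finset.sum_congr rfl fun e _ => ?_
    rw [Finset.sum_mul]
    exact Finset.sum_congr rfl fun e' _ => by ring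
  -- the structure-function combination
  set K : Fin r → (Fin n → ℝ) × (Fin n → ℝ) → ℝ := fun e w =>
    (pbr (G a) (C b c e) w + ∑ e', C b c e' w * C a e' e w)
    + (pbr (G b) (C c a e) w + ∑ e', C c a e' w * C b e' e w)
    + (pbr (G c) (C a b e) w + ∑ e', C a b e' w * C c e' e w) with hK
  have hKsmooth : ∀ e, ContDiff ℝ (⊤ : ℕ∞) (K e) := by
    intro e
    rw [hK]
    exact (((OSJ.pbr_smooth (hG a) (hC b c e)).add
        (ContDiff.sum fun e' _ => (hC b c e').mul (hC a e' e))).add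
      ((OSJ.pbr_smooth (hG b) (hC c a e)).add
        (ContDiff.sum fun e' _ => (hC c a e').mul (hC b e' e)))).add
      ((OSJ.pbr_smooth (hG c) (hC a b e)).add
        (ContDiff.sum fun e' _ => (hC a b e').mul (hC c e' e)))
  -- off-shell identity ∑ K_e G_e = 0
  have step1 : ∀ w, ∑ e, K e w * G e w = 0 := by
    intro w
    have hJ := OSJ.jacobi (hG a) (hG b) (hG c) w
    rw [hexp a b c w, hexp b c a w, hexp c a b w] at hJ
    simp only [hK, add_mul, Finset.sum_add_distrib]
    linarith [hJ]
  -- differentiate at z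
  have hH : HasFDerivAt (fun w => ∑ e, K e w * G e w)
      (∑ e, (K e z • fderiv ℝ (G e) z + G e z • fderiv ℝ (K e) z)) z :=
    HasFDerivAt.fun_sum fun e _ =>
      HasFDerivAt.mul (((hKsmooth e).differentiable OSJ.le1 z).hasFDerivAt)
        (((hG e).differentiable OSJ.le1 z).hasFDerivAt)
  have h0 : (fun w => ∑ e, K e w * G e w) = fun _ => (0:ℝ) := funext step1
  have hL0 : (∑ e, (K e z • fderiv ℝ (G e) z + G e z • fderiv ℝ (K e) z)) = 0 := by
    rw [← hH.fderiv, h0]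
    simp
  obtain ⟨v, hv⟩ := hreg z hz (Pi.single d 1)
  have hvG : ∀ e, fderiv ℝ (G e) z v = (Pi.single d 1 : Fin r → ℝ) e := by
    intro e
    rw [fderiv_pi (fun a => (hG a).differentiable OSJ.le1 z)] at hv
    have := congrFun hv e
    simpa [ContinuousLinearMap.pi_apply] using this
  have hsum : ∑ e, K e z * fderiv ℝ (G e) z v = 0 := by
    have h := congrArg (fun (L : ((Fin n → ℝ) × (Fin n → ℝ)) →L[ℝ] ℝ) => L v) hL0
    simpa [ContinuousLinearMap.sum_apply, ContinuousLinearMap.add_apply,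
      ContinuousLinearMap.smul_apply, smul_eq_mul, hz] using h
  have hKd : K d z = 0 := by
    rw [show (∑ e, K e z * fderiv ℝ (G e) z v) = ∑ e, K e z * (Pi.single d 1 : Fin r → ℝ) e from
      Finset.sum_congr rfl fun e _ => by rw [hvG e]] at hsum
    simpa [Pi.single_apply] using hsum
  rw [hK] at hKd
  simp only [] at hKd
  have h1 : (∑ e, C a b e z * C e c d z) = -∑ e, C a b e z * C c e d z := by
    rw [← Finset.sum_neg_distrib]
    exact Finset.sum_congr rfl fun e _ => by rw [hCanti e c d z]; ring
  have h2 : (∑ e, C b c e z * C e a d z) = -∑ e, C b c e z * C a e d z := by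
    rw [← Finset.sum_neg_distrib]
    exact Finset.sum_congr rfl fun e _ => by rw [hCanti e a d z]; ring
  have h3 : (∑ e, C c a e z * C e b d z) = -∑ e, C c a e z * C b e d z := by
    rw [← Finset.sum_neg_distrib]
    exact Finset.sum_congr rfl fun e _ => by rw [hCanti e b d z]; ring
  rw [h1, h2, h3]
  linarith [hKd]
end

section
/- Suppose G_1,…,G_r are first class with structure functions C^c_{ab} for the canonical Poisson bracket on ℝ^n × ℝ^n, let H, V_a^b : ℝ^n × ℝ^n → ℝ be smooth with {G_a, H} = Σ_b V_a^b G_b identically, and suppose that at every point of the constraint surface the total derivative of G = (G_1,…,G_r) is surjective onto ℝ^r. Then for all a,b,c the function {G_a, V_b^c} − {G_b, V_a^c} + {H, C^c_{ab}} + Σ_{d=1}^r ( V_b^d C^c_{ad} − V_a^d C^c_{bd} − V_d^c C^d_{ab} ) vanishes at every point of the constraint surface. -/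
open scoped BigOperators

lemma le_inftop (k : ℕ∞) : (k : WithTop ℕ∞) ≤ ((⊤ : ℕ∞) : WithTop ℕ∞) :=
  WithTop.coe_le_coe.2 le_top

variable {n : ℕ}

lemma contDiff_pd {f : (Fin n → ℝ) × (Fin n → ℝ) → ℝ} (hf : ContDiff ℝ (⊤ : ℕ∞) f)
    (v : (Fin n → ℝ) × (Fin n → ℝ)) :
    ContDiff ℝ (⊤ : ℕ∞) (fun y => fderiv ℝ f y v) :=
  (hf.fderiv_right (by simp)).clm_apply contDiff_const

lemma diffAt_of_smooth {α : Type*} [NormedAddCommGroup α] [NormedSpace ℝ α]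
    {f : (Fin n → ℝ) × (Fin n → ℝ) → α} (hf : ContDiff ℝ (⊤ : ℕ∞) f)
    (z : (Fin n → ℝ) × (Fin n → ℝ)) : DifferentiableAt ℝ f z :=
  (hf.differentiable (by simp)) z







lemma contDiff_pbr {f g : (Fin n → ℝ) × (Fin n → ℝ) → ℝ} (hf : ContDiff ℝ (⊤ : ℕ∞) f)
    (hg : ContDiff ℝ (⊤ : ℕ∞) g) : ContDiff ℝ (⊤ : ℕ∞) (pbr f g) := by
  unfold pbr pdx pdp
  exact ContDiff.sum fun i _ =>
    ((contDiff_pd hf _).mul (contDiff_pd hg _)).sub ((contDiff_pd hf _).mul (contDiff_pd hg _))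

lemma pbr_swap (f g : (Fin n → ℝ) × (Fin n → ℝ) → ℝ) (z : (Fin n → ℝ) × (Fin n → ℝ)) :
    pbr f g z = -pbr g f z := by
  unfold pbr
  rw [← Finset.sum_neg_distrib]
  exact Finset.sum_congr rfl fun i _ => by ring

lemma pbr_neg_right (f F : (Fin n → ℝ) × (Fin n → ℝ) → ℝ) (z : (Fin n → ℝ) × (Fin n → ℝ)) :
    pbr f (fun y => -F y) z = -pbr f F z := by
  unfold pbr pdx pdp
  rw [← Finset.sum_neg_distrib]
  refine Finset.sum_congr rfl fun i _ => ?_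
  rw [fderiv_fun_neg]
  simp only [ContinuousLinearMap.neg_apply]
  ring

lemma pd_mul {f g : (Fin n → ℝ) × (Fin n → ℝ) → ℝ} {z : (Fin n → ℝ) × (Fin n → ℝ)}
    (hf : DifferentiableAt ℝ f z) (hg : DifferentiableAt ℝ g z)
    (v : (Fin n → ℝ) × (Fin n → ℝ)) :
    fderiv ℝ (fun y => f y * g y) z v = fderiv ℝ f z v * g z + f z * fderiv ℝ g z v := by
  rw [fderiv_fun_mul hf hg]
  simp
  ring

lemma pbr_mul_right {f u w : (Fin n → ℝ) × (Fin n → ℝ) → ℝ} {z : (Fin n → ℝ) × (Fin n → ℝ)}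
    (hu : DifferentiableAt ℝ u z) (hw : DifferentiableAt ℝ w z) :
    pbr f (fun y => u y * w y) z = pbr f u z * w z + u z * pbr f w z := by
  unfold pbr pdx pdp
  rw [Finset.sum_mul, Finset.mul_sum, ← Finset.sum_add_distrib]
  refine Finset.sum_congr rfl fun i _ => ?_
  rw [pd_mul hu hw, pd_mul hu hw]
  ring

lemma pbr_sum_right {f : (Fin n → ℝ) × (Fin n → ℝ) → ℝ} {ι : Type*} (s : Finset ι)
    {F : ι → (Fin n → ℝ) × (Fin n → ℝ) → ℝ} {z : (Fin n → ℝ) × (Fin n → ℝ)}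
    (hF : ∀ d ∈ s, DifferentiableAt ℝ (F d) z) :
    pbr f (fun y => ∑ d ∈ s, F d y) z = ∑ d ∈ s, pbr f (F d) z := by
  unfold pbr pdx pdp
  rw [Finset.sum_comm]
  refine Finset.sum_congr rfl fun i _ => ?_
  rw [fderiv_fun_sum hF]
  simp only [ContinuousLinearMap.sum_apply]
  rw [Finset.mul_sum, Finset.mul_sum, ← Finset.sum_sub_distrib]

abbrev xv {n : ℕ} (i : Fin n) : (Fin n → ℝ) × (Fin n → ℝ) := (Pi.single i 1, 0)
abbrev pv {n : ℕ} (i : Fin n) : (Fin n → ℝ) × (Fin n → ℝ) := (0, Pi.single i 1)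

lemma pbr_eq (f g : (Fin n → ℝ) × (Fin n → ℝ) → ℝ) (z : (Fin n → ℝ) × (Fin n → ℝ)) :
    pbr f g z = ∑ i, (fderiv ℝ f z (xv i) * fderiv ℝ g z (pv i)
      - fderiv ℝ f z (pv i) * fderiv ℝ g z (xv i)) := rfl

lemma pd_symm {f : (Fin n → ℝ) × (Fin n → ℝ) → ℝ} (hf : ContDiff ℝ (⊤ : ℕ∞) f)
    (z v w : (Fin n → ℝ) × (Fin n → ℝ)) :
    fderiv ℝ (fun y => fderiv ℝ f y w) z v = fderiv ℝ (fun y => fderiv ℝ f y v) z w := by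
  have hfd : ContDiff ℝ (⊤ : ℕ∞) (fderiv ℝ f) := hf.fderiv_right (by simp)
  have hd : DifferentiableAt ℝ (fderiv ℝ f) z := diffAt_of_smooth hfd z
  have h1 : ∀ u : (Fin n → ℝ) × (Fin n → ℝ),
      fderiv ℝ (fun y => fderiv ℝ f y u) z = (fderiv ℝ (fderiv ℝ f) z).flip u := by
    intro u
    rw [fderiv_clm_apply hd (differentiableAt_const u)]
    simp
  rw [h1 w, h1 v]
  simp only [ContinuousLinearMap.flip_apply]
  exact (hf.contDiffAt.isSymmSndFDerivAt (by simpa using le_inftop 2)) v w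

lemma pd_pbr {g h : (Fin n → ℝ) × (Fin n → ℝ) → ℝ} (hg : ContDiff ℝ (⊤ : ℕ∞) g)
    (hh : ContDiff ℝ (⊤ : ℕ∞) h) (z v : (Fin n → ℝ) × (Fin n → ℝ)) :
    fderiv ℝ (pbr g h) z v = ∑ j, (fderiv ℝ (fun y => fderiv ℝ g y (xv j)) z (v) * fderiv ℝ h z (pv j) + fderiv ℝ g z (xv j) * fderiv ℝ (fun y => fderiv ℝ h y (pv j)) z (v) - (fderiv ℝ (fun y => fderiv ℝ g y (pv j)) z (v) * fderiv ℝ h z (xv j) + fderiv ℝ g z (pv j) * fderiv ℝ (fun y => fderiv ℝ h y (xv j)) z (v))) := by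
  have h1 : pbr g h = fun y => ∑ j, (fderiv ℝ g y (xv j) * fderiv ℝ h y (pv j)
      - fderiv ℝ g y (pv j) * fderiv ℝ h y (xv j)) := rfl
  have dgx : ∀ w, DifferentiableAt ℝ (fun y => fderiv ℝ g y w) z :=
    fun w => diffAt_of_smooth (contDiff_pd hg w) z
  have dhx : ∀ w, DifferentiableAt ℝ (fun y => fderiv ℝ h y w) z :=
    fun w => diffAt_of_smooth (contDiff_pd hh w) z
  rw [h1, fderiv_fun_sum (A := fun j y => fderiv ℝ g y (xv j) * fderiv ℝ h y (pv j) - fderiv ℝ g y (pv j) * fderiv ℝ h y (xv j)) (fun j _ => (((dgx (xv j)).mul (dhx (pv j))).sub ((dgx (pv j)).mul (dhx (xv j)))))]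
  simp only [ContinuousLinearMap.sum_apply]
  refine Finset.sum_congr rfl fun j _ => ?_
  rw [fderiv_fun_sub (f := fun y => fderiv ℝ g y (xv j) * fderiv ℝ h y (pv j)) (g := fun y => fderiv ℝ g y (pv j) * fderiv ℝ h y (xv j)) ((dgx (xv j)).mul (dhx (pv j))) ((dgx (pv j)).mul (dhx (xv j)))]
  simp only [ContinuousLinearMap.sub_apply]
  rw [pd_mul (dgx (xv j)) (dhx (pv j)) v, pd_mul (dgx (pv j)) (dhx (xv j)) v]

lemma pbr_pbr (f g h : (Fin n → ℝ) × (Fin n → ℝ) → ℝ) (hg : ContDiff ℝ (⊤ : ℕ∞) g)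
    (hh : ContDiff ℝ (⊤ : ℕ∞) h) (z : (Fin n → ℝ) × (Fin n → ℝ)) :
    pbr f (pbr g h) z = ∑ i, ∑ j, (fderiv ℝ f z (xv i) * (fderiv ℝ (fun y => fderiv ℝ g y (xv j)) z (pv i) * fderiv ℝ h z (pv j) + fderiv ℝ g z (xv j) * fderiv ℝ (fun y => fderiv ℝ h y (pv j)) z (pv i) - (fderiv ℝ (fun y => fderiv ℝ g y (pv j)) z (pv i) * fderiv ℝ h z (xv j) + fderiv ℝ g z (pv j) * fderiv ℝ (fun y => fderiv ℝ h y (xv j)) z (pv i))) - fderiv ℝ f z (pv i) * (fderiv ℝ (fun y => fderiv ℝ g y (xv j)) z (xv i) * fderiv ℝ h z (pv j) + fderiv ℝ g z (xv j) * fderiv ℝ (fun y => fderiv ℝ h y (pv j)) z (xv i) - (fderiv ℝ (fun y => fderiv ℝ g y (pv j)) z (xv i) * fderiv ℝ h z (xv j) + fderiv ℝ g z (pv j) * fderiv ℝ (fun y => fderiv ℝ h y (xv j)) z (xv i)))) := by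
  rw [pbr_eq f (pbr g h) z]
  refine Finset.sum_congr rfl fun i _ => ?_
  rw [pd_pbr hg hh z (pv i), pd_pbr hg hh z (xv i), Finset.mul_sum, Finset.mul_sum,
    ← Finset.sum_sub_distrib]

lemma jacobi (f g h : (Fin n → ℝ) × (Fin n → ℝ) → ℝ) (hf : ContDiff ℝ (⊤ : ℕ∞) f)
    (hg : ContDiff ℝ (⊤ : ℕ∞) g) (hh : ContDiff ℝ (⊤ : ℕ∞) h)
    (z : (Fin n → ℝ) × (Fin n → ℝ)) :
    pbr f (pbr g h) z + pbr g (pbr h f) z + pbr h (pbr f g) z = 0 := by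
  have cancel : ∀ (T : Fin n → Fin n → ℝ), (∀ i j, T i j + T j i = 0) →
      ∑ i, ∑ j, T i j = 0 := by
    intro T hT
    have h2 : (∑ i, ∑ j, T i j) + (∑ i, ∑ j, T j i) = 0 := by
      simp only [← Finset.sum_add_distrib]
      simp [hT]
    have h3 : ∑ i, ∑ j, (fun a b => T b a) i j = ∑ i, ∑ j, T i j := Finset.sum_comm
    simp only at h3
    linarith
  rw [pbr_pbr f g h hg hh z, pbr_pbr g h f hh hf z, pbr_pbr h f g hf hg z]
  simp only [← Finset.sum_add_distrib]
  refine cancel _ (fun i j => ?_)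
  have sf := pd_symm hf z
  have sg := pd_symm hg z
  have sh := pd_symm hh z
  rw [sf (xv j) (xv i), sf (xv j) (pv i), sf (pv j) (xv i), sf (pv j) (pv i),
      sg (xv j) (xv i), sg (xv j) (pv i), sg (pv j) (xv i), sg (pv j) (pv i),
      sh (xv j) (xv i), sh (xv j) (pv i), sh (pv j) (xv i), sh (pv j) (pv i)]
  ring

lemma pbr_sum_mul {f : (Fin n → ℝ) × (Fin n → ℝ) → ℝ} {r : ℕ}
    {u w : Fin r → (Fin n → ℝ) × (Fin n → ℝ) → ℝ} {z : (Fin n → ℝ) × (Fin n → ℝ)}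
    (hu : ∀ d, DifferentiableAt ℝ (u d) z) (hw : ∀ d, DifferentiableAt ℝ (w d) z) :
    pbr f (fun y => ∑ d, u d y * w d y) z
      = ∑ d, (pbr f (u d) z * w d z + u d z * pbr f (w d) z) := by
  rw [pbr_sum_right Finset.univ (F := fun d y => u d y * w d y) (fun d _ => (hu d).mul (hw d))]
  exact Finset.sum_congr rfl fun d _ => pbr_mul_right (hu d) (hw d)

/-- For regular irreducible first-class constraints `G_a` (structure functions `C^c_{ab}`,
written `C a b c`) and a compatible Hamiltonian `H` with `{G_a, H} = Σ_b V_a^b G_b`, the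
function `{G_a,V_b^c} − {G_b,V_a^c} + {H,C^c_{ab}} + Σ_d ( V_b^d C^c_{ad} − V_a^d C^c_{bd}
 − V_d^c C^d_{ab} )` vanishes at every point of the constraint surface. -/
theorem first_class_hamiltonian_onshell_identity {n r : ℕ}
    (G : Fin r → (Fin n → ℝ) × (Fin n → ℝ) → ℝ)
    (hG : ∀ a, ContDiff ℝ (⊤ : ℕ∞) (G a))
    (C : Fin r → Fin r → Fin r → (Fin n → ℝ) × (Fin n → ℝ) → ℝ)
    (hC : ∀ a b c, ContDiff ℝ (⊤ : ℕ∞) (C a b c))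
    (hCanti : ∀ a b c z, C a b c z = - C b a c z)
    (hfc : ∀ a b z, pbr (G a) (G b) z = ∑ c, C a b c z * G c z)
    (H : (Fin n → ℝ) × (Fin n → ℝ) → ℝ) (hH : ContDiff ℝ (⊤ : ℕ∞) H)
    (V : Fin r → Fin r → (Fin n → ℝ) × (Fin n → ℝ) → ℝ)
    (hV : ∀ a b, ContDiff ℝ (⊤ : ℕ∞) (V a b))
    (hGH : ∀ a z, pbr (G a) H z = ∑ b, V a b z * G b z)
    (hreg : ∀ z, (∀ a, G a z = 0) →
      Function.Surjective (fderiv ℝ (fun w => (fun a => G a w : Fin r → ℝ)) z)) :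
    ∀ (a b c : Fin r) (z : (Fin n → ℝ) × (Fin n → ℝ)), (∀ e, G e z = 0) →
      pbr (G a) (V b c) z - pbr (G b) (V a c) z + pbr H (C a b c) z
        + ∑ d, (V b d z * C a d c z - V a d z * C b d c z - V d c z * C a b d z)
      = 0 := by
  intro a b c z hz
  set F : Fin r → (Fin n → ℝ) × (Fin n → ℝ) → ℝ := fun c z =>
    pbr (G a) (V b c) z - pbr (G b) (V a c) z + pbr H (C a b c) z
      + ∑ d, (V b d z * C a d c z - V a d z * C b d c z - V d c z * C a b d z) with hF
  show F c z = 0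
  -- the master identity
  have key : ∀ y, ∑ e, F e y * G e y = 0 := by
    intro y
    have jac := jacobi (G a) (G b) H (hG a) (hG b) hH y
    have e1 : pbr (G b) H = fun y => ∑ d, V b d y * G d y := funext (hGH b)
    have e2 : pbr H (G a) = fun y => ∑ d, (-(V a d y)) * G d y := by
      funext y
      rw [pbr_swap H (G a) y, hGH a y, ← Finset.sum_neg_distrib]
      exact Finset.sum_congr rfl fun d _ => by ring
    have e3 : pbr (G a) (G b) = fun y => ∑ e, C a b e y * G e y := funext (hfc a b)
    rw [e1, e2, e3] at jac
    rw [pbr_sum_mul (fun d => diffAt_of_smooth (hV b d) y) (fun d => diffAt_of_smooth (hG d) y),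
        pbr_sum_mul (u := fun d y => -V a d y) (fun d => ((diffAt_of_smooth (hV a d) y).neg))
          (fun d => diffAt_of_smooth (hG d) y),
        pbr_sum_mul (fun e => diffAt_of_smooth (hC a b e) y)
          (fun e => diffAt_of_smooth (hG e) y)] at jac
    have e4 : ∀ e yy, pbr H (G e) yy = -∑ d, V e d yy * G d yy := fun e yy => by
      rw [pbr_swap H (G e) yy, hGH e yy]
    simp only [pbr_neg_right, hfc, e4] at jac
    revert jac
    intro jac
    rw [← jac]
    simp only [hF, add_mul, sub_mul, Finset.sum_mul, Finset.mul_sum, mul_neg, neg_mul,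
      Finset.sum_add_distrib, Finset.sum_sub_distrib, Finset.sum_neg_distrib]
    have s1 : (∑ x : Fin r, ∑ i : Fin r, V b x y * (C a x i y * G i y))
        = ∑ x : Fin r, ∑ i : Fin r, V b i y * C a i x y * G x y := by
      rw [Finset.sum_comm]
      exact Finset.sum_congr rfl fun x _ => Finset.sum_congr rfl fun i _ => by ring
    have s2 : (∑ x : Fin r, ∑ i : Fin r, V a x y * (C b x i y * G i y))
        = ∑ x : Fin r, ∑ i : Fin r, V a i y * C b i x y * G x y := by
      rw [Finset.sum_comm]
      exact Finset.sum_congr rfl fun x _ => Finset.sum_congr rfl fun i _ => by ring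
    have s3 : (∑ x : Fin r, ∑ i : Fin r, C a b x y * (V x i y * G i y))
        = ∑ x : Fin r, ∑ i : Fin r, V i x y * C a b i y * G x y := by
      rw [Finset.sum_comm]
      exact Finset.sum_congr rfl fun x _ => Finset.sum_congr rfl fun i _ => by ring
    rw [s1, s2, s3]
    ring
  -- smoothness of F
  have hFsm : ∀ e, ContDiff ℝ (⊤ : ℕ∞) (F e) := fun e =>
    (((contDiff_pbr (hG a) (hV b e)).sub (contDiff_pbr (hG b) (hV a e))).add
      (contDiff_pbr hH (hC a b e))).add
      (ContDiff.sum fun d _ =>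
        (((hV b d).mul (hC a d e)).sub ((hV a d).mul (hC b d e))).sub ((hV d e).mul (hC a b d)))
  have hΦ : (fun w => ∑ e, F e w * G e w) = fun _ => (0:ℝ) := funext key
  have hdz : fderiv ℝ (fun w => ∑ e, F e w * G e w) z = 0 := by
    rw [hΦ]; simp
  have hstar : ∀ w, ∑ e, F e z * fderiv ℝ (G e) z w = 0 := by
    intro w
    have h5 : fderiv ℝ (fun w => ∑ e, F e w * G e w) z w = 0 := by
      rw [hdz]; rfl
    rw [fderiv_fun_sum (A := fun e yy => F e yy * G e yy) (fun e _ => (diffAt_of_smooth (hFsm e) z).mul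
      (diffAt_of_smooth (hG e) z))] at h5
    simp only [ContinuousLinearMap.sum_apply] at h5
    have h6 : ∀ e, fderiv ℝ (fun yy => F e yy * G e yy) z w = F e z * fderiv ℝ (G e) z w := by
      intro e
      rw [pd_mul (diffAt_of_smooth (hFsm e) z) (diffAt_of_smooth (hG e) z) w, hz e]
      ring
    simp only [h6] at h5
    exact h5
  obtain ⟨w, hw⟩ := hreg z hz (fun e => F e z)
  have hpi : fderiv ℝ (fun w => (fun e => G e w : Fin r → ℝ)) z
      = ContinuousLinearMap.pi (fun e => fderiv ℝ (G e) z) :=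
    fderiv_pi (fun e => diffAt_of_smooth (hG e) z)
  have hw' : ∀ e, fderiv ℝ (G e) z w = F e z := by
    intro e
    have h7 := congrFun hw e
    rw [hpi] at h7
    simpa using h7
  have hsq := hstar w
  simp only [hw'] at hsq
  have hz0 : ∀ e, F e z * F e z = 0 := by
    intro e
    exact (Finset.sum_eq_zero_iff_of_nonneg (fun i _ => mul_self_nonneg (F i z))).1 hsq e
      (Finset.mem_univ e)
  exact mul_self_eq_zero.1 (hz0 c)
end

section
/- Gauge invariance of the constrained mechanical model with Hamiltonian and on-shell-trivial modifications: let x, p : ℝ → ℝ^n and λ, ε : ℝ → ℝ^r be smooth curves, define along them δx^i := Σ_a ε^a ∂G_a/∂p_i(x,p), δp_i := Σ_a ε^a ( −∂G_a/∂x^i(x,p) + Σ_b ω^b_{ia}(x) G_b(x,p) ), δλ^a := dε^a/dt − Σ_{b,c} C^a_{bc} λ^b ε^c + Σ_b V_b^a ε^b + Σ_{i,b} ω^a_{ib}(x) ( dx^i/dt − ∂H/∂p_i(x,p) − Σ_c λ^c ∂G_c/∂p_i(x,p) ) ε^b, and let δL(t) be the derivative at s = 0 of L_s(t) := Σ_i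 ( p_i + s δp_i ) d(x^i + s δx^i)/dt − H(x + s δx, p + s δp) − Σ_a ( λ^a + s δλ^a ) G_a(x + s δx, p + s δp). Then for all t, δL(t) = d/dt [ Σ_a ε^a ( Σ_i p_i ∂G_a/∂p_i(x,p) − G_a(x,p) ) ]; in particular the action ∫ L dt is invariant for compactly supported ε. -/
open scoped BigOperators

lemma clm_decomp {n : ℕ} (φ : ((Fin n → ℝ) × (Fin n → ℝ)) →L[ℝ] ℝ) (v w : Fin n → ℝ) :
    φ (v, w) = (∑ i, v i * φ (Pi.single i 1, 0)) + ∑ i, w i * φ (0, Pi.single i 1) := by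
  have hv : (v, w) = (∑ i, v i • ((Pi.single i 1 : Fin n → ℝ), (0 : Fin n → ℝ)))
      + ∑ i, w i • ((0 : Fin n → ℝ), (Pi.single i 1 : Fin n → ℝ)) := by
    ext j
    · simp [Prod.fst_sum, Finset.sum_apply, Pi.single_apply, Finset.sum_ite_eq']
    · simp [Prod.snd_sum, Finset.sum_apply, Pi.single_apply, Finset.sum_ite_eq']
  rw [hv, map_add, map_sum, map_sum]
  simp only [map_smul, smul_eq_mul]

lemma contDiff_pdp {n : ℕ} {f : (Fin n → ℝ) × (Fin n → ℝ) → ℝ}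
    (hf : ContDiff ℝ (⊤ : ℕ∞) f) (i : Fin n) : ContDiff ℝ (⊤ : ℕ∞) (pdp f i) :=
  (hf.fderiv_right (le_of_eq (by rfl))).clm_apply contDiff_const

lemma contDiff_pdx {n : ℕ} {f : (Fin n → ℝ) × (Fin n → ℝ) → ℝ}
    (hf : ContDiff ℝ (⊤ : ℕ∞) f) (i : Fin n) : ContDiff ℝ (⊤ : ℕ∞) (pdx f i) :=
  (hf.fderiv_right (le_of_eq (by rfl))).clm_apply contDiff_const

lemma hasDerivAt_comp_curve {n : ℕ} {x p : ℝ → Fin n → ℝ}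
    {f : (Fin n → ℝ) × (Fin n → ℝ) → ℝ} (hf : ContDiff ℝ (⊤ : ℕ∞) f)
    (hx : ContDiff ℝ (⊤ : ℕ∞) x) (hp : ContDiff ℝ (⊤ : ℕ∞) p) (t : ℝ) :
    HasDerivAt (fun u => f (x u, p u))
      ((∑ i, deriv (fun u => x u i) t * pdx f i (x t, p t))
        + ∑ i, deriv (fun u => p u i) t * pdp f i (x t, p t)) t := by
  have hX : HasDerivAt x (fun i => deriv (fun u => x u i) t) t :=
    hasDerivAt_pi.mpr fun i =>
      (((contDiff_pi.mp hx i).differentiable (by simp)) t).hasDerivAt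
  have hP : HasDerivAt p (fun i => deriv (fun u => p u i) t) t :=
    hasDerivAt_pi.mpr fun i =>
      (((contDiff_pi.mp hp i).differentiable (by simp)) t).hasDerivAt
  have hz : HasDerivAt (fun u => (x u, p u))
      ((fun i => deriv (fun u => x u i) t), (fun i => deriv (fun u => p u i) t)) t :=
    hX.prodMk hP
  have hF := ((hf.differentiable (by simp)) (x t, p t)).hasFDerivAt.comp_hasDerivAt t hz
  have e : (fderiv ℝ f (x t, p t))
        ((fun i => deriv (fun u => x u i) t), (fun i => deriv (fun u => p u i) t))
      = (∑ i, deriv (fun u => x u i) t * pdx f i (x t, p t))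
        + ∑ i, deriv (fun u => p u i) t * pdp f i (x t, p t) := clm_decomp _ _ _
  exact e ▸ hF

lemma contDiff_comp_curve {n : ℕ} {x p : ℝ → Fin n → ℝ}
    {f : (Fin n → ℝ) × (Fin n → ℝ) → ℝ} (hf : ContDiff ℝ (⊤ : ℕ∞) f)
    (hx : ContDiff ℝ (⊤ : ℕ∞) x) (hp : ContDiff ℝ (⊤ : ℕ∞) p) :
    ContDiff ℝ (⊤ : ℕ∞) (fun u => f (x u, p u)) :=
  hf.comp (hx.prodMk hp)

lemma key_algebra {n r : ℕ}
    (Ga : Fin r → ℝ) (Gx Gp : Fin r → Fin n → ℝ) (Hx Hp : Fin n → ℝ)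
    (C : Fin r → Fin r → Fin r → ℝ) (V : Fin r → Fin r → ℝ)
    (ω : Fin r → Fin n → Fin r → ℝ)
    (lam eps epsd : Fin r → ℝ) (pp pd xd : Fin n → ℝ) (Pd : Fin r → Fin n → ℝ)
    (hCanti : ∀ a b c, C a b c = - C b a c)
    (hfc : ∀ a b, (∑ i, (Gx a i * Gp b i - Gp a i * Gx b i)) = ∑ c, C a b c * Ga c)
    (hGH : ∀ a, (∑ i, (Gx a i * Hp i - Gp a i * Hx i)) = ∑ b, V a b * Ga b)
    (dx dp dxd : Fin n → ℝ) (dlam : Fin r → ℝ)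
    (hdx : ∀ i, dx i = ∑ a, eps a * Gp a i)
    (hdp : ∀ i, dp i = ∑ a, eps a * (-Gx a i + ∑ b, ω b i a * Ga b))
    (hdxd : ∀ i, dxd i = ∑ a, (epsd a * Gp a i + eps a * Pd a i))
    (hdlam : ∀ a, dlam a = epsd a - (∑ b, ∑ c, C b c a * lam b * eps c)
        + (∑ b, V b a * eps b)
        + ∑ i, ∑ b, ω a i b * (xd i - Hp i - ∑ c, lam c * Gp c i) * eps b) :
    (∑ i, (dp i * xd i + pp i * dxd i))
      - ((∑ i, dx i * Hx i) + ∑ i, dp i * Hp i)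
      - ∑ a, (dlam a * Ga a + lam a * ((∑ i, dx i * Gx a i) + ∑ i, dp i * Gp a i))
    = ∑ a, (epsd a * ((∑ i, pp i * Gp a i) - Ga a)
        + eps a * ((∑ i, (pd i * Gp a i + pp i * Pd a i))
            - ((∑ i, xd i * Gx a i) + ∑ i, pd i * Gp a i))) := by
  have h1 : (∑ i, dp i * xd i)
      = (∑ i, ∑ e, ∑ g, eps e * ω g i e * xd i * Ga g)
        - ∑ a, eps a * ∑ i, xd i * Gx a i := by
    have e1 : ∀ i, dp i * xd i
        = (∑ e, ∑ g, eps e * ω g i e * xd i * Ga g) - ∑ e, eps e * (xd i * Gx e i) := by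
      intro i
      rw [hdp i, Finset.sum_mul, ← Finset.sum_sub_distrib]
      refine Finset.sum_congr rfl fun e _ => ?_
      rw [mul_add, add_mul, Finset.mul_sum, Finset.sum_mul]
      rw [Finset.sum_congr rfl fun g _ =>
        (by ring : eps e * (ω g i e * Ga g) * xd i = eps e * ω g i e * xd i * Ga g)]
      ring
    rw [Finset.sum_congr rfl fun i _ => e1 i, Finset.sum_sub_distrib]
    congr 1
    rw [Finset.sum_comm]
    refine Finset.sum_congr rfl fun e _ => ?_
    rw [Finset.mul_sum]
  have h2 : (∑ i, pp i * dxd i)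
      = (∑ a, epsd a * ∑ i, pp i * Gp a i) + ∑ a, eps a * ∑ i, pp i * Pd a i := by
    have e1 : ∀ i, pp i * dxd i
        = (∑ a, epsd a * (pp i * Gp a i)) + ∑ a, eps a * (pp i * Pd a i) := by
      intro i
      rw [hdxd i, Finset.mul_sum, ← Finset.sum_add_distrib]
      exact Finset.sum_congr rfl fun a _ => by ring
    rw [Finset.sum_congr rfl fun i _ => e1 i, Finset.sum_add_distrib]
    congr 1
    · rw [Finset.sum_comm]
      exact Finset.sum_congr rfl fun a _ => by rw [Finset.mul_sum]
    · rw [Finset.sum_comm]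
      exact Finset.sum_congr rfl fun a _ => by rw [Finset.mul_sum]
  have h3 : ((∑ i, dx i * Hx i) + ∑ i, dp i * Hp i)
      = (∑ i, ∑ e, ∑ g, eps e * ω g i e * Hp i * Ga g)
        - ∑ a, eps a * ∑ b, V a b * Ga b := by
    have e1 : ∀ i, dx i * Hx i + dp i * Hp i
        = (∑ e, ∑ g, eps e * ω g i e * Hp i * Ga g)
          - ∑ e, eps e * (Gx e i * Hp i - Gp e i * Hx i) := by
      intro i
      rw [hdx i, hdp i, Finset.sum_mul, Finset.sum_mul, ← Finset.sum_add_distrib,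
        ← Finset.sum_sub_distrib]
      refine Finset.sum_congr rfl fun e _ => ?_
      rw [mul_add, add_mul, Finset.mul_sum, Finset.sum_mul]
      rw [Finset.sum_congr rfl fun g _ =>
        (by ring : eps e * (ω g i e * Ga g) * Hp i = eps e * ω g i e * Hp i * Ga g)]
      ring
    rw [← Finset.sum_add_distrib, Finset.sum_congr rfl fun i _ => e1 i,
      Finset.sum_sub_distrib]
    congr 1
    rw [Finset.sum_comm]
    refine Finset.sum_congr rfl fun e _ => ?_
    rw [← Finset.mul_sum, hGH e, Finset.mul_sum]
  have hdl : (∑ a, dlam a * Ga a)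
      = ((∑ a, epsd a * Ga a)
          - ∑ a, (∑ b, ∑ c, C b c a * lam b * eps c) * Ga a)
        + (∑ a, (∑ b, V b a * eps b) * Ga a)
        + ∑ a, (∑ i, ∑ b, ω a i b * (xd i - Hp i - ∑ c, lam c * Gp c i) * eps b) * Ga a := by
    rw [Finset.sum_congr rfl fun a _ => (by rw [hdlam a]; ring :
      dlam a * Ga a
        = (epsd a * Ga a - (∑ b, ∑ c, C b c a * lam b * eps c) * Ga a)
          + (∑ b, V b a * eps b) * Ga a
          + (∑ i, ∑ b, ω a i b * (xd i - Hp i - ∑ c, lam c * Gp c i) * eps b) * Ga a)]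
    simp only [Finset.sum_add_distrib, Finset.sum_sub_distrib]
  have hCC : (∑ a, (∑ b, ∑ c, C b c a * lam b * eps c) * Ga a)
      = - ∑ a, lam a * ∑ c, eps c * ∑ d, C c a d * Ga d := by
    simp only [Finset.sum_mul]
    rw [Finset.sum_comm, ← Finset.sum_neg_distrib]
    refine Finset.sum_congr rfl fun b _ => ?_
    rw [Finset.sum_comm]
    conv_rhs => rw [Finset.mul_sum, ← Finset.sum_neg_distrib]
    refine Finset.sum_congr rfl fun c _ => ?_
    conv_rhs => rw [Finset.mul_sum, Finset.mul_sum, ← Finset.sum_neg_distrib]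
    refine Finset.sum_congr rfl fun a _ => ?_
    rw [hCanti b c a]; ring
  have hVV : (∑ a, (∑ b, V b a * eps b) * Ga a)
      = ∑ a, eps a * ∑ b, V a b * Ga b := by
    simp only [Finset.sum_mul]
    rw [Finset.sum_comm]
    refine Finset.sum_congr rfl fun b _ => ?_
    rw [Finset.mul_sum]
    exact Finset.sum_congr rfl fun a _ => by ring
  have hWW : (∑ a, (∑ i, ∑ b, ω a i b * (xd i - Hp i - ∑ c, lam c * Gp c i) * eps b) * Ga a)
      = (∑ i, ∑ e, ∑ g, eps e * ω g i e * xd i * Ga g)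
        - (∑ i, ∑ e, ∑ g, eps e * ω g i e * Hp i * Ga g)
        - ∑ i, ∑ e, ∑ g, eps e * ω g i e * (∑ c, lam c * Gp c i) * Ga g := by
    simp only [Finset.sum_mul]
    rw [Finset.sum_comm]
    simp only [← Finset.sum_sub_distrib]
    refine Finset.sum_congr rfl fun i _ => ?_
    rw [Finset.sum_comm]
    refine Finset.sum_congr rfl fun e _ => ?_
    refine Finset.sum_congr rfl fun g _ => ?_
    ring
  have e2 : ∀ a, (∑ i, dx i * Gx a i) + ∑ i, dp i * Gp a i
      = (∑ i, ∑ e, ∑ g, eps e * ω g i e * Gp a i * Ga g)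
        - ∑ c, eps c * ∑ d, C c a d * Ga d := by
    intro a
    have e1 : ∀ i, dx i * Gx a i + dp i * Gp a i
        = (∑ e, ∑ g, eps e * ω g i e * Gp a i * Ga g)
          - ∑ e, eps e * (Gx e i * Gp a i - Gp e i * Gx a i) := by
      intro i
      rw [hdx i, hdp i, Finset.sum_mul, Finset.sum_mul, ← Finset.sum_add_distrib,
        ← Finset.sum_sub_distrib]
      refine Finset.sum_congr rfl fun e _ => ?_
      rw [mul_add, add_mul, Finset.mul_sum, Finset.sum_mul]
      rw [Finset.sum_congr rfl fun g _ =>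
        (by ring : eps e * (ω g i e * Ga g) * Gp a i = eps e * ω g i e * Gp a i * Ga g)]
      ring
    rw [← Finset.sum_add_distrib, Finset.sum_congr rfl fun i _ => e1 i,
      Finset.sum_sub_distrib]
    congr 1
    rw [Finset.sum_comm]
    refine Finset.sum_congr rfl fun e _ => ?_
    rw [← Finset.mul_sum, hfc e a]
  have hLA : (∑ a, lam a * ((∑ i, dx i * Gx a i) + ∑ i, dp i * Gp a i))
      = (∑ i, ∑ e, ∑ g, eps e * ω g i e * (∑ c, lam c * Gp c i) * Ga g)
        - ∑ a, lam a * ∑ c, eps c * ∑ d, C c a d * Ga d := by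
    rw [Finset.sum_congr rfl fun a _ => (by rw [e2 a]; ring :
      lam a * ((∑ i, dx i * Gx a i) + ∑ i, dp i * Gp a i)
        = lam a * (∑ i, ∑ e, ∑ g, eps e * ω g i e * Gp a i * Ga g)
          - lam a * ∑ c, eps c * ∑ d, C c a d * Ga d)]
    rw [Finset.sum_sub_distrib]
    congr 1
    calc ∑ a, lam a * ∑ i, ∑ e, ∑ g, eps e * ω g i e * Gp a i * Ga g
        = ∑ a, ∑ i, ∑ e, ∑ g, lam a * (eps e * ω g i e * Gp a i * Ga g) := by
          refine Finset.sum_congr rfl fun a _ => ?_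
          rw [Finset.mul_sum]
          refine Finset.sum_congr rfl fun i _ => ?_
          rw [Finset.mul_sum]
          refine Finset.sum_congr rfl fun e _ => ?_
          rw [Finset.mul_sum]
      _ = ∑ i, ∑ a, ∑ e, ∑ g, lam a * (eps e * ω g i e * Gp a i * Ga g) :=
          Finset.sum_comm
      _ = ∑ i, ∑ e, ∑ a, ∑ g, lam a * (eps e * ω g i e * Gp a i * Ga g) :=
          Finset.sum_congr rfl fun i _ => Finset.sum_comm
      _ = ∑ i, ∑ e, ∑ g, ∑ a, lam a * (eps e * ω g i e * Gp a i * Ga g) :=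
          Finset.sum_congr rfl fun i _ => Finset.sum_congr rfl fun e _ => Finset.sum_comm
      _ = ∑ i, ∑ e, ∑ g, eps e * ω g i e * (∑ c, lam c * Gp c i) * Ga g := by
          refine Finset.sum_congr rfl fun i _ => ?_
          refine Finset.sum_congr rfl fun e _ => ?_
          refine Finset.sum_congr rfl fun g _ => ?_
          conv_rhs => rw [Finset.mul_sum, Finset.sum_mul]
          exact Finset.sum_congr rfl fun c _ => by ring
  have h4 : (∑ a, (dlam a * Ga a + lam a * ((∑ i, dx i * Gx a i) + ∑ i, dp i * Gp a i)))
      = (∑ a, epsd a * Ga a) + (∑ a, eps a * ∑ b, V a b * Ga b)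
        + (∑ i, ∑ e, ∑ g, eps e * ω g i e * xd i * Ga g)
        - ∑ i, ∑ e, ∑ g, eps e * ω g i e * Hp i * Ga g := by
    rw [Finset.sum_add_distrib, hdl, hCC, hVV, hLA, hWW]
    ring
  rw [Finset.sum_add_distrib, h1, h2, h3, h4]
  have h5 : (∑ a, (epsd a * ((∑ i, pp i * Gp a i) - Ga a)
        + eps a * ((∑ i, (pd i * Gp a i + pp i * Pd a i))
            - ((∑ i, xd i * Gx a i) + ∑ i, pd i * Gp a i))))
      = (∑ a, epsd a * ∑ i, pp i * Gp a i) - (∑ a, epsd a * Ga a)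
        + ((∑ a, eps a * ∑ i, pp i * Pd a i) - ∑ a, eps a * ∑ i, xd i * Gx a i) := by
    rw [Finset.sum_congr rfl fun a _ =>
      (by rw [Finset.sum_add_distrib]; ring :
        epsd a * ((∑ i, pp i * Gp a i) - Ga a)
          + eps a * ((∑ i, (pd i * Gp a i + pp i * Pd a i))
              - ((∑ i, xd i * Gx a i) + ∑ i, pd i * Gp a i))
        = (epsd a * ∑ i, pp i * Gp a i - epsd a * Ga a)
          + (eps a * ∑ i, pp i * Pd a i - eps a * ∑ i, xd i * Gx a i))]
    rw [Finset.sum_add_distrib, Finset.sum_sub_distrib, Finset.sum_sub_distrib]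
  rw [h5]
  ring


/-- Gauge invariance of the constrained mechanical model with Hamiltonian `H` and
on-shell-trivial modifications `ω^b_{ia}` (written `ω b i a`) of the gauge generators: the
variation of `L = Σ_i p_i ẋ^i − H − Σ_a λ^a G_a` is the total time derivative
`d/dt [ Σ_a ε^a ( Σ_i p_i ∂G_a/∂p_i − G_a ) ]`. -/
theorem gauge_invariance_hamiltonian_model {n r : ℕ}
    (G : Fin r → (Fin n → ℝ) × (Fin n → ℝ) → ℝ)
    (hG : ∀ a, ContDiff ℝ (⊤ : ℕ∞) (G a))
    (C : Fin r → Fin r → Fin r → (Fin n → ℝ) × (Fin n → ℝ) → ℝ)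
    (hC : ∀ a b c, ContDiff ℝ (⊤ : ℕ∞) (C a b c))
    (hCanti : ∀ a b c z, C a b c z = - C b a c z)
    (hfc : ∀ a b z, pbr (G a) (G b) z = ∑ c, C a b c z * G c z)
    (H : (Fin n → ℝ) × (Fin n → ℝ) → ℝ) (hH : ContDiff ℝ (⊤ : ℕ∞) H)
    (V : Fin r → Fin r → (Fin n → ℝ) × (Fin n → ℝ) → ℝ)
    (hV : ∀ a b, ContDiff ℝ (⊤ : ℕ∞) (V a b))
    (hGH : ∀ a z, pbr (G a) H z = ∑ b, V a b z * G b z)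
    (ω : Fin r → Fin n → Fin r → (Fin n → ℝ) → ℝ)
    (hω : ∀ b i a, ContDiff ℝ (⊤ : ℕ∞) (ω b i a))
    (x p : ℝ → Fin n → ℝ) (lam ε : ℝ → Fin r → ℝ)
    (hx : ContDiff ℝ (⊤ : ℕ∞) x) (hp : ContDiff ℝ (⊤ : ℕ∞) p)
    (hlam : ContDiff ℝ (⊤ : ℕ∞) lam) (hε : ContDiff ℝ (⊤ : ℕ∞) ε)
    (dx : ℝ → Fin n → ℝ)
    (hdx : ∀ t i, dx t i = ∑ a, ε t a * pdp (G a) i (x t, p t))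
    (dp : ℝ → Fin n → ℝ)
    (hdp : ∀ t i, dp t i = ∑ a, ε t a *
      (-pdx (G a) i (x t, p t) + ∑ b, ω b i a (x t) * G b (x t, p t)))
    (dlam : ℝ → Fin r → ℝ)
    (hdlam : ∀ t a, dlam t a =
      deriv (fun u => ε u a) t - (∑ b, ∑ c, C b c a (x t, p t) * lam t b * ε t c)
        + (∑ b, V b a (x t, p t) * ε t b)
        + ∑ i, ∑ b, ω a i b (x t)
            * (deriv (fun u => x u i) t - pdp H i (x t, p t)
                - ∑ c, lam t c * pdp (G c) i (x t, p t)) * ε t b)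
    (L : ℝ → ℝ → ℝ)
    (hL : ∀ s t, L s t =
      (∑ i, (p t i + s * dp t i) * deriv (fun u => x u i + s * dx u i) t)
        - H (fun j => x t j + s * dx t j, fun j => p t j + s * dp t j)
        - ∑ a, (lam t a + s * dlam t a)
            * G a (fun j => x t j + s * dx t j, fun j => p t j + s * dp t j)) :
    ∀ t, deriv (fun s => L s t) 0
        = deriv (fun u => ∑ a, ε u a *
            ((∑ i, p u i * pdp (G a) i (x u, p u)) - G a (x u, p u))) t := by
  intro t
  have hone : ((⊤ : ℕ∞) : WithTop ℕ∞) ≠ 0 := by simp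
  have hxiD : ∀ i, Differentiable ℝ (fun u => x u i) :=
    fun i => (contDiff_pi.mp hx i).differentiable hone
  have hpiD : ∀ i, Differentiable ℝ (fun u => p u i) :=
    fun i => (contDiff_pi.mp hp i).differentiable hone
  have hεD : ∀ a, Differentiable ℝ (fun u => ε u a) :=
    fun a => (contDiff_pi.mp hε a).differentiable hone
  have hPfunD : ∀ a i, Differentiable ℝ (fun u => pdp (G a) i (x u, p u)) :=
    fun a i => (contDiff_comp_curve (contDiff_pdp (hG a) i) hx hp).differentiable hone
  have hdxfun : ∀ i, (fun u => dx u i) = fun u => ∑ a, ε u a * pdp (G a) i (x u, p u) :=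
    fun i => funext fun u => hdx u i
  have hdxD : ∀ i, DifferentiableAt ℝ (fun u => dx u i) t := by
    intro i
    rw [hdxfun i]
    exact DifferentiableAt.fun_sum fun a _ => (hεD a t).mul (hPfunD a i t)
  have hDXd : ∀ i, deriv (fun u => dx u i) t
      = ∑ a, (deriv (fun u => ε u a) t * pdp (G a) i (x t, p t)
          + ε t a * deriv (fun u => pdp (G a) i (x u, p u)) t) := by
    intro i
    have h : HasDerivAt (fun u => dx u i)
        (∑ a, (deriv (fun u => ε u a) t * pdp (G a) i (x t, p t)
          + ε t a * deriv (fun u => pdp (G a) i (x u, p u)) t)) t := by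
      rw [hdxfun i]
      exact HasDerivAt.fun_sum fun a _ =>
        ((hεD a t).hasDerivAt.mul (hPfunD a i t).hasDerivAt)
    exact h.deriv
  -- the variation curve in phase space
  have hγ : HasDerivAt (fun s : ℝ =>
      (((fun j => x t j + s * dx t j) : Fin n → ℝ),
        ((fun j => p t j + s * dp t j) : Fin n → ℝ))) (dx t, dp t) 0 :=
    HasDerivAt.prodMk
      (hasDerivAt_pi.mpr fun j => (hasDerivAt_mul_const (dx t j)).const_add (x t j))
      (hasDerivAt_pi.mpr fun j => (hasDerivAt_mul_const (dp t j)).const_add (p t j))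
  have hγ0 : ((((fun j => x t j + (0:ℝ) * dx t j) : Fin n → ℝ)),
      (((fun j => p t j + (0:ℝ) * dp t j) : Fin n → ℝ))) = (x t, p t) := by
    simp
  have hcomp : ∀ (f : (Fin n → ℝ) × (Fin n → ℝ) → ℝ), ContDiff ℝ (⊤ : ℕ∞) f →
      HasDerivAt (fun s : ℝ => f (fun j => x t j + s * dx t j, fun j => p t j + s * dp t j))
        (fderiv ℝ f (x t, p t) (dx t, dp t)) 0 := by
    intro f hf
    have hd : HasFDerivAt f (fderiv ℝ f (x t, p t))
        ((((fun j => x t j + (0:ℝ) * dx t j) : Fin n → ℝ)),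
          (((fun j => p t j + (0:ℝ) * dp t j) : Fin n → ℝ))) := by
      rw [hγ0]
      exact ((hf.differentiable hone) _).hasFDerivAt
    exact hd.comp_hasDerivAt 0 hγ
  have haff : ∀ (A B : ℝ), HasDerivAt (fun s : ℝ => A + s * B) B 0 :=
    fun A B => (hasDerivAt_mul_const B).const_add A
  have hXd : ∀ (s : ℝ) (i : Fin n), deriv (fun u => x u i + s * dx u i) t
      = deriv (fun u => x u i) t + s * deriv (fun u => dx u i) t := by
    intro s i
    rw [deriv_fun_add ((hxiD i) t) ((hdxD i).const_mul s), deriv_const_mul s (hdxD i)]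
  have hLfun : (fun s => L s t) = fun s =>
      (∑ i, (p t i + s * dp t i)
          * (deriv (fun u => x u i) t + s * deriv (fun u => dx u i) t))
        - H (fun j => x t j + s * dx t j, fun j => p t j + s * dp t j)
        - ∑ a, (lam t a + s * dlam t a)
            * G a (fun j => x t j + s * dx t j, fun j => p t j + s * dp t j) := by
    funext s
    rw [hL s t]
    simp only [hXd]
  have hA : HasDerivAt (fun s => L s t)
      ((∑ i, (dp t i * deriv (fun u => x u i) t + p t i * deriv (fun u => dx u i) t))
        - ((∑ i, dx t i * pdx H i (x t, p t)) + ∑ i, dp t i * pdp H i (x t, p t))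
        - ∑ a, (dlam t a * G a (x t, p t)
            + lam t a * ((∑ i, dx t i * pdx (G a) i (x t, p t))
              + ∑ i, dp t i * pdp (G a) i (x t, p t)))) 0 := by
    rw [hLfun]
    refine HasDerivAt.sub (HasDerivAt.sub (HasDerivAt.fun_sum fun i _ => ?_) ?_)
      (HasDerivAt.fun_sum fun a _ => ?_)
    · have h := (haff (p t i) (dp t i)).fun_mul
        (haff (deriv (fun u => x u i) t) (deriv (fun u => dx u i) t))
      simpa using h
    · have h := hcomp H hH
      rw [show fderiv ℝ H (x t, p t) (dx t, dp t)
          = (∑ i, dx t i * pdx H i (x t, p t)) + ∑ i, dp t i * pdp H i (x t, p t)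
        from clm_decomp _ _ _] at h
      exact h
    · have h2 := hcomp (G a) (hG a)
      rw [show fderiv ℝ (G a) (x t, p t) (dx t, dp t)
          = (∑ i, dx t i * pdx (G a) i (x t, p t)) + ∑ i, dp t i * pdp (G a) i (x t, p t)
        from clm_decomp _ _ _] at h2
      have h1 : HasDerivAt (fun s : ℝ => lam t a + s * dlam t a) (dlam t a) 0 :=
        haff (lam t a) (dlam t a)
      have h3 := h1.fun_mul h2
      simpa using h3
  have hB : HasDerivAt (fun u => ∑ a, ε u a *
      ((∑ i, p u i * pdp (G a) i (x u, p u)) - G a (x u, p u)))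
      (∑ a, (deriv (fun u => ε u a) t
          * ((∑ i, p t i * pdp (G a) i (x t, p t)) - G a (x t, p t))
        + ε t a * ((∑ i, (deriv (fun u => p u i) t * pdp (G a) i (x t, p t)
              + p t i * deriv (fun u => pdp (G a) i (x u, p u)) t))
            - ((∑ i, deriv (fun u => x u i) t * pdx (G a) i (x t, p t))
              + ∑ i, deriv (fun u => p u i) t * pdp (G a) i (x t, p t))))) t := by
    refine HasDerivAt.fun_sum fun a _ => HasDerivAt.mul (hεD a t).hasDerivAt
      (HasDerivAt.sub (HasDerivAt.fun_sum fun i _ => HasDerivAt.mul (hpiD i t).hasDerivAt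
        (hPfunD a i t).hasDerivAt) (hasDerivAt_comp_curve (hG a) hx hp t))
  rw [hA.deriv, hB.deriv]
  exact key_algebra (fun a => G a (x t, p t))
    (fun a i => pdx (G a) i (x t, p t)) (fun a i => pdp (G a) i (x t, p t))
    (fun i => pdx H i (x t, p t)) (fun i => pdp H i (x t, p t))
    (fun a b c => C a b c (x t, p t)) (fun a b => V a b (x t, p t))
    (fun g i e => ω g i e (x t)) (lam t) (ε t)
    (fun a => deriv (fun u => ε u a) t) (p t)
    (fun i => deriv (fun u => p u i) t) (fun i => deriv (fun u => x u i) t)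
    (fun a i => deriv (fun u => pdp (G a) i (x u, p u)) t)
    (fun a b c => hCanti a b c (x t, p t))
    (fun a b => hfc a b (x t, p t)) (fun a => hGH a (x t, p t))
    (dx t) (dp t) (fun i => deriv (fun u => dx u i) t) (dlam t)
    (hdx t) (hdp t) hDXd (hdlam t)
end

section
/- Compatibility of constraints with a Hamiltonian implies the flow preserves the constraint surface: let G_1,…,G_r, F and W_a^b : ℝ^n × ℝ^n → ℝ be smooth functions with {G_a, F} = Σ_{b=1}^r W_a^b G_b identically for all a (canonical bracket). Let I ⊆ ℝ be an interval and γ = (x,p) : I → ℝ^n × ℝ^n a C¹ solution of Hamilton's equations dx^i/dt = ∂F/∂p_i(γ(t)), dp_i/dt = −∂F/∂x^i(γ(t)). If G_a(γ(t₀)) = 0 for all a at some t₀ ∈ I, then G_a(γ(t)) = 0 for all a and all t ∈ I; i.e., the Hamiltonian flow of F does not leave the constraint surface. -/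
open scoped BigOperators

open Set in
/-- If `f : ℝⁿ×ℝⁿ → ℝ` is differentiable at `z`, its differential applied to a vector `v`
decomposes into partial derivatives. -/
lemma fderiv_apply_decomp {n : ℕ} (f : (Fin n → ℝ) × (Fin n → ℝ) → ℝ)
    (z : (Fin n → ℝ) × (Fin n → ℝ)) (v : (Fin n → ℝ) × (Fin n → ℝ)) :
    fderiv ℝ f z v = ∑ i, v.1 i * pdx f i z + ∑ i, v.2 i * pdp f i z := by
  have hv : v = (∑ i, v.1 i • ((Pi.single i 1 : Fin n → ℝ), (0 : Fin n → ℝ)))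
      + ∑ i, v.2 i • ((0 : Fin n → ℝ), (Pi.single i 1 : Fin n → ℝ)) := by
    apply Prod.ext <;>
    · simp only [Prod.fst_sum, Prod.snd_sum, Prod.smul_mk, smul_zero, Prod.fst_add,
        Prod.snd_add, Finset.sum_const_zero, add_zero, zero_add]
      funext j
      simp [Finset.sum_apply, Pi.single_apply, mul_ite]
  conv_lhs => rw [hv]
  simp only [map_add, map_sum, map_smul, smul_eq_mul]
  rfl

open Set in
/-- A solution of a linear ODE `y' = M(t) y` with continuous coefficients on a compact
interval, vanishing at one point, vanishes identically on the interval. -/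
lemma linear_ode_zero_aux {r : ℕ} (c d : ℝ) (hcd : c ≤ d) (M : ℝ → Fin r → Fin r → ℝ)
    (hM : ∀ a b, ContinuousOn (fun s => M s a b) (Icc c d))
    (y : ℝ → Fin r → ℝ)
    (hy' : ∀ s ∈ Icc c d, HasDerivAt y (fun a => ∑ b, M s a b * y s b) s)
    (t₁ : ℝ) (ht₁ : t₁ ∈ Icc c d) (h0 : y t₁ = 0) :
    ∀ s ∈ Icc c d, y s = 0 := by
  -- a bound on the coefficients
  have hφ : ContinuousOn (fun s => ∑ a, ∑ b, |M s a b|) (Icc c d) := by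
    refine continuousOn_finset_sum _ fun a _ => continuousOn_finset_sum _ fun b _ => (hM a b).abs
  obtain ⟨C, hC⟩ := isCompact_Icc.exists_bound_of_continuousOn hφ
  have hC0 : (0 : ℝ) ≤ C := le_trans (norm_nonneg _) (hC c ⟨le_refl c, hcd⟩)
  have hCab : ∀ s ∈ Icc c d, ∀ a b, |M s a b| ≤ C := by
    intro s hs a b
    have h1 : |M s a b| ≤ ∑ b', |M s a b'| :=
      Finset.single_le_sum (f := fun b' => |M s a b'|) (fun b' _ => abs_nonneg _) (Finset.mem_univ b)
    have h2 : ∑ b', |M s a b'| ≤ ∑ a', ∑ b', |M s a' b'| :=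
      Finset.single_le_sum (f := fun a' => ∑ b', |M s a' b'|)
        (fun a' _ => Finset.sum_nonneg fun b' _ => abs_nonneg _) (Finset.mem_univ a)
    have h3 := hC s hs
    rw [Real.norm_eq_abs] at h3
    exact le_trans (le_trans h1 h2) (le_trans (le_abs_self _) h3)
  -- the (clamped) vector field and its Lipschitz constant
  set v : ℝ → (Fin r → ℝ) → (Fin r → ℝ) :=
    fun s u a => ∑ b, M ((projIcc c d hcd s : ℝ)) a b * u b with hvdef
  have hvmem : ∀ s ∈ Icc c d, v s = fun u a => ∑ b, M s a b * u b := by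
    intro s hs
    simp [hvdef, projIcc_of_mem hcd hs]
  set K : NNReal := Real.toNNReal ((r : ℝ) * C) with hKdef
  have hKval : (K : ℝ) = (r : ℝ) * C := Real.coe_toNNReal _ (by positivity)
  have hv : ∀ s, LipschitzWith K (v s) := by
    intro s
    apply LipschitzWith.of_dist_le_mul
    intro u u'
    rw [dist_pi_le_iff (by positivity)]
    intro a
    rw [Real.dist_eq]
    have hmem : (projIcc c d hcd s : ℝ) ∈ Icc c d := (projIcc c d hcd s).2
    calc |v s u a - v s u' a|
        = |∑ b, M ((projIcc c d hcd s : ℝ)) a b * (u b - u' b)| := by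
          simp [hvdef, mul_sub, Finset.sum_sub_distrib]
      _ ≤ ∑ b, |M ((projIcc c d hcd s : ℝ)) a b * (u b - u' b)| :=
          Finset.abs_sum_le_sum_abs _ _
      _ ≤ ∑ _b : Fin r, C * dist u u' := by
          refine Finset.sum_le_sum fun b _ => ?_
          rw [abs_mul]
          exact mul_le_mul (hCab _ hmem a b)
            ((Real.dist_eq (u b) (u' b) ▸ dist_le_pi_dist u u' b)) (abs_nonneg _)
            hC0
      _ = (K : ℝ) * dist u u' := by
          rw [Finset.sum_const, Finset.card_univ, Fintype.card_fin, nsmul_eq_mul, hKval, mul_assoc]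
  have hy : ∀ c' d', Icc c' d' ⊆ Icc c d → ContinuousOn y (Icc c' d') :=
    fun c' d' hsub s hs => ((hy' s (hsub hs)).continuousAt).continuousWithinAt
  -- uniqueness to the right of t₁
  have hright : EqOn y (fun _ => 0) (Icc t₁ d) := by
    refine ODE_solution_unique_of_mem_Icc_right
      (fun s _ => (hv s).lipschitzOnWith (s := univ)) (hy t₁ d (Icc_subset_Icc_left ht₁.1)) ?_
      (fun _ _ => trivial) continuousOn_const ?_ (fun _ _ => trivial) h0
    · intro s hs
      have hmem : s ∈ Icc c d := ⟨le_trans ht₁.1 hs.1, hs.2.le⟩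
      rw [hvmem s hmem]
      exact (hy' s hmem).hasDerivWithinAt
    · intro s hs
      have : v s (0 : Fin r → ℝ) = 0 := by funext a; simp [hvdef]
      rw [this]
      exact (hasDerivWithinAt_const _ _ _)
  -- uniqueness to the left of t₁
  have hleft : EqOn y (fun _ => 0) (Icc c t₁) := by
    refine ODE_solution_unique_of_mem_Icc_left
      (fun s _ => (hv s).lipschitzOnWith (s := univ)) (hy c t₁ (Icc_subset_Icc_right ht₁.2)) ?_
      (fun _ _ => trivial) continuousOn_const ?_ (fun _ _ => trivial) h0
    · intro s hs
      have hmem : s ∈ Icc c d := ⟨hs.1.le, le_trans hs.2 ht₁.2⟩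
      rw [hvmem s hmem]
      exact (hy' s hmem).hasDerivWithinAt
    · intro s hs
      have : v s (0 : Fin r → ℝ) = 0 := by funext a; simp [hvdef]
      rw [this]
      exact (hasDerivWithinAt_const _ _ _)
  intro s hs
  rcases le_total s t₁ with h | h
  · exact hleft ⟨hs.1, h⟩
  · exact hright ⟨h, hs.2⟩

/-- Compatibility of constraints with a Hamiltonian implies the Hamiltonian flow preserves
the constraint surface: if `{G_a, F} = Σ_b W_a^b G_b` identically and `γ` is a C¹ solution of
Hamilton's equations for `F` on an interval `I` with `G(γ(t₀)) = 0` for some `t₀ ∈ I`, then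
`G(γ(t)) = 0` for all `t ∈ I`. -/
theorem hamiltonian_flow_preserves_constraint_surface {n r : ℕ}
    (G : Fin r → (Fin n → ℝ) × (Fin n → ℝ) → ℝ)
    (F : (Fin n → ℝ) × (Fin n → ℝ) → ℝ)
    (W : Fin r → Fin r → (Fin n → ℝ) × (Fin n → ℝ) → ℝ)
    (hG : ∀ a, ContDiff ℝ (⊤ : ℕ∞) (G a)) (hF : ContDiff ℝ (⊤ : ℕ∞) F)
    (hW : ∀ a b, ContDiff ℝ (⊤ : ℕ∞) (W a b))
    (hcompat : ∀ a z, pbr (G a) F z = ∑ b, W a b z * G b z)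
    (I : Set ℝ) (hI : I.OrdConnected)
    (γ : ℝ → (Fin n → ℝ) × (Fin n → ℝ))
    (hγ : ∀ t ∈ I, HasDerivAt γ
      ((fun i => pdp F i (γ t)), fun i => -(pdx F i (γ t))) t)
    (t₀ : ℝ) (ht₀ : t₀ ∈ I) (h0 : ∀ a, G a (γ t₀) = 0) :
    ∀ t ∈ I, ∀ a, G a (γ t) = 0 := by
  classical
  have hγcont : ∀ s ∈ I, ContinuousAt γ s := fun s hs => (hγ s hs).continuousAt
  -- derivative of y s := (G a (γ s))_a
  set y : ℝ → Fin r → ℝ := fun s a => G a (γ s) with hydef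
  have hyderiv : ∀ s ∈ I, HasDerivAt y (fun a => ∑ b, W a b (γ s) * y s b) s := by
    intro s hs
    rw [hasDerivAt_pi]
    intro a
    have hGd := (((hG a).differentiable (by simp)) (γ s)).hasFDerivAt
    have hchain := hGd.comp_hasDerivAt s (hγ s hs)
    have hval : (fderiv ℝ (G a) (γ s))
        ((fun i => pdp F i (γ s)), fun i => -(pdx F i (γ s)))
        = ∑ b, W a b (γ s) * y s b := by
      rw [fderiv_apply_decomp, ← hcompat a (γ s)]
      unfold pbr
      rw [← Finset.sum_add_distrib]
      exact Finset.sum_congr rfl fun i _ => by ring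
    rw [← hval]
    exact hchain
  intro t ht
  rcases le_total t₀ t with hle | hle
  · have hsub : Set.Icc t₀ t ⊆ I := hI.out ht₀ ht
    have := linear_ode_zero_aux t₀ t hle (fun s a b => W a b (γ s))
      (fun a b s hs => ((hW a b).continuous.continuousAt.comp (hγcont s (hsub hs))).continuousWithinAt)
      y (fun s hs => hyderiv s (hsub hs)) t₀ ⟨le_refl _, hle⟩ (funext h0)
    intro a
    exact congrFun (this t ⟨hle, le_refl _⟩) a
  · have hsub : Set.Icc t t₀ ⊆ I := hI.out ht ht₀
    have := linear_ode_zero_aux t t₀ hle (fun s a b => W a b (γ s))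
      (fun a b s hs => ((hW a b).continuous.continuousAt.comp (hγcont s (hsub hs))).continuousWithinAt)
      y (fun s hs => hyderiv s (hsub hs)) t₀ ⟨hle, le_refl _⟩ (funext h0)
    intro a
    exact congrFun (this t ⟨le_refl _, hle⟩) a
end
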